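/- Let P and Q be probability measures on a measurable space (A, F) with P absolutely continuous with respect to Q, and suppose there are constants β₁ ∈ (0,1] and β₂ ∈ [0,1] such that β₂ ≤ dP/dQ(a) ≤ 1/β₁ for Q-almost every a. Then the chi-squared divergence satisfies χ²(P,Q) ≤ max{ 1/β₁ − 1, 1 − β₂ }·|P−Q|, where χ²(P,Q) = ∫_A (dP/dQ − 1)² dQ and |P−Q| is the total variation distance. -/

import Mathlib

open MeasureTheory

/-- Chi-squared divergence: `χ²(P,Q) = ∫ (dP/dQ − 1)² dQ`. -/
noncomputable def chiSqDiv {A : Type*} [MeasurableSpace A] (P Q : Measure A) : ℝ :=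
  ∫ a, ((P.rnDeriv Q a).toReal - 1) ^ 2 ∂Q

/-- Total variation distance: `|P−Q| = 2 ⨆_{E measurable} |P(E) − Q(E)|`. -/
noncomputable def tvDist {A : Type*} [MeasurableSpace A] (P Q : Measure A) : ℝ :=
  2 * ⨆ E : {E : Set A // MeasurableSet E}, |(P E.1).toReal - (Q E.1).toReal|

theorem chiSq_le_tv_general {A : Type*} [MeasurableSpace A]
    (P Q : Measure A) [IsProbabilityMeasure P] [IsProbabilityMeasure Q]
    (hPQ : P ≪ Q) (β₁ β₂ : ℝ) (hβ₁ : β₁ ∈ Set.Ioc (0 : ℝ) 1) (hβ₂ : β₂ ∈ Set.Icc (0 : ℝ) 1)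
    (hbound : ∀ᵐ a ∂Q, β₂ ≤ ((P.rnDeriv Q) a).toReal ∧ ((P.rnDeriv Q) a).toReal ≤ 1 / β₁) :
    chiSqDiv P Q ≤ max (1 / β₁ - 1) (1 - β₂) * tvDist P Q := by
  obtain ⟨hβ₁0, hβ₁1⟩ := hβ₁
  obtain ⟨hβ₂0, hβ₂1⟩ := hβ₂
  set M := max (1 / β₁ - 1) (1 - β₂) with hM
  have hM0 : 0 ≤ M := le_trans (by nlinarith [one_le_one_div hβ₁0 hβ₁1]) (le_max_left _ _)
  set f := fun a => (P.rnDeriv Q a).toReal with hf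
  have hfmeas : Measurable f := (Measure.measurable_rnDeriv P Q).ennreal_toReal
  have hfint : Integrable f Q := Measure.integrable_toReal_rnDeriv
  have hint1 : Integrable (fun a => |f a - 1|) Q := (hfint.sub (integrable_const 1)).abs
  have hae : ∀ᵐ a ∂Q, (f a - 1) ^ 2 ≤ M * |f a - 1| := by
    filter_upwards [hbound] with a ⟨h1, h2⟩
    have habs : |f a - 1| ≤ M := by
      rw [abs_le]
      constructor
      · have : 1 - β₂ ≤ M := le_max_right _ _
        linarith
      · have : 1 / β₁ - 1 ≤ M := le_max_left _ _
        linarith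
    have : (f a - 1) ^ 2 = |f a - 1| * |f a - 1| := by
      rw [← abs_mul, ← sq, abs_of_nonneg (sq_nonneg _)]
    rw [this]
    exact mul_le_mul_of_nonneg_right habs (abs_nonneg _)
  have hint2 : Integrable (fun a => (f a - 1) ^ 2) Q := by
    refine Integrable.mono' (hint1.const_mul M)
      ((hfmeas.sub measurable_const).pow_const 2).aestronglyMeasurable ?_
    filter_upwards [hae] with a h
    rw [Real.norm_eq_abs, abs_of_nonneg (sq_nonneg _)]
    exact h
  have step1 : chiSqDiv P Q ≤ M * ∫ a, |f a - 1| ∂Q := by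
    rw [← integral_const_mul]
    exact integral_mono_ae hint2 (hint1.const_mul M) hae
  -- Step 2: ∫|f-1| = 2 (P E - Q E) for E = {1 ≤ f}
  set E : Set A := {a | 1 ≤ f a} with hE_def
  have hE : MeasurableSet E := measurableSet_le measurable_const hfmeas
  have hPE : ∀ s : Set A, MeasurableSet s → ∫ a in s, f a ∂Q = (P s).toReal := fun s hs =>
    Measure.setIntegral_toReal_rnDeriv hPQ s
  have hQE : ∀ s : Set A, (Q s).toReal = ∫ a in s, (1 : ℝ) ∂Q := by
    intro s
    simp [Measure.restrict_apply_univ, Measure.real]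
  have hintE : ∫ a in E, |f a - 1| ∂Q = (P E).toReal - (Q E).toReal := by
    have hcong : ∀ a ∈ E, |f a - 1| = f a - 1 := by
      intro a ha
      have h1 : (1:ℝ) ≤ f a := ha
      rw [abs_of_nonneg (by linarith)]
    rw [setIntegral_congr_fun hE hcong,
      integral_sub (hfint.restrict) (integrable_const 1).restrict, hPE E hE]
    simp [Measure.real]
  have hintEc : ∫ a in Eᶜ, |f a - 1| ∂Q = (Q Eᶜ).toReal - (P Eᶜ).toReal := by
    have : ∀ a ∈ Eᶜ, |f a - 1| = 1 - f a := by
      intro a ha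
      have : f a < 1 := not_le.mp ha
      rw [abs_of_nonpos (by linarith)]
      ring
    rw [setIntegral_congr_fun hE.compl this,
      integral_sub (integrable_const 1).restrict (hfint.restrict), hPE Eᶜ hE.compl]
    simp [Measure.real]
  have hcompl : ∀ (μ : Measure A) [IsProbabilityMeasure μ],
      (μ Eᶜ).toReal = 1 - (μ E).toReal := by
    intro μ _
    rw [prob_compl_eq_one_sub hE, ENNReal.toReal_sub_of_le prob_le_one ENNReal.one_ne_top]
    simp
  have habs_int : ∫ a, |f a - 1| ∂Q = 2 * ((P E).toReal - (Q E).toReal) := by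
    rw [← integral_add_compl hE hint1, hintE, hintEc, hcompl P, hcompl Q]
    ring
  have hbdd : BddAbove (Set.range fun E : {E : Set A // MeasurableSet E} =>
      |(P E.1).toReal - (Q E.1).toReal|) := by
    refine ⟨1, ?_⟩
    rintro x ⟨⟨s, hs⟩, rfl⟩
    have h1 : (P s).toReal ≤ 1 := by
      simpa using ENNReal.toReal_mono ENNReal.one_ne_top (prob_le_one (μ := P) (s := s))
    have h2 : (Q s).toReal ≤ 1 := by
      simpa using ENNReal.toReal_mono ENNReal.one_ne_top (prob_le_one (μ := Q) (s := s))
    have h3 : 0 ≤ (P s).toReal := ENNReal.toReal_nonneg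
    have h4 : 0 ≤ (Q s).toReal := ENNReal.toReal_nonneg
    rw [abs_sub_le_iff]
    constructor <;> linarith
  have step2 : ∫ a, |f a - 1| ∂Q ≤ tvDist P Q := by
    rw [habs_int, tvDist]
    have : (P E).toReal - (Q E).toReal ≤ |(P E).toReal - (Q E).toReal| := le_abs_self _
    have hsup : |(P E).toReal - (Q E).toReal| ≤
        ⨆ E : {E : Set A // MeasurableSet E}, |(P E.1).toReal - (Q E.1).toReal| :=
      le_ciSup hbdd ⟨E, hE⟩
    linarith
  calc chiSqDiv P Q ≤ M * ∫ a, |f a - 1| ∂Q := step1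
    _ ≤ M * tvDist P Q := mul_le_mul_of_nonneg_left step2 hM0
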